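/- Fix v2 ≥ v3 ≥ v4 > 0. Then as v1 increases to v2 + v3 + v4 from below, the quantity Q(v1,v2,v3,v4) = (v1+v2+v3+v4)/Lmax[v1,v2,v3,v4] tends to 54; in particular the bound R_u(v) < 1 − (3/4)·2^{1/3} on the region {v1 < v2+v3+v4} is sharp. -/

import Mathlib

/-- `Lmax4 v1 v2 v3 v4` is the supremum of
`L(v,p) = v4·p1·p2·p3 + v3·p1·p2·p4 + v2·p1·p3·p4 + v1·p2·p3·p4`
over the probability simplex. -/
noncomputable def Lmax4 (v1 v2 v3 v4 : ℝ) : ℝ :=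
  sSup {x : ℝ | ∃ p1 p2 p3 p4 : ℝ, 0 ≤ p1 ∧ 0 ≤ p2 ∧ 0 ≤ p3 ∧ 0 ≤ p4 ∧
    p1 + p2 + p3 + p4 = 1 ∧
    x = v4 * p1 * p2 * p3 + v3 * p1 * p2 * p4 + v2 * p1 * p3 * p4
        + v1 * p2 * p3 * p4}

/-- Relative loss of efficiency of the uniform design. -/
noncomputable def Ru (v1 v2 v3 v4 : ℝ) : ℝ :=
  1 - (1/4) * ((v1 + v2 + v3 + v4) / Lmax4 v1 v2 v3 v4) ^ ((1 : ℝ)/3)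

lemma amgm3 (b c t : ℝ) (hb : 0 ≤ b) (hc : 0 ≤ c) (ht : 0 ≤ t) (h : t + b + c = 1) :
    b * c * t ≤ 1/27 := by
  nlinarith [sq_nonneg (b-c), sq_nonneg (b+c-2*t), sq_nonneg (b-t), sq_nonneg (c-t),
    mul_nonneg hb hc, mul_nonneg hb ht, mul_nonneg hc ht]

lemma lmax_ub (v1 v2 v3 v4 : ℝ) (hv4 : 0 ≤ v4) (h34 : v4 ≤ v3) (h23 : v3 ≤ v2)
    (h1 : v1 ≤ v2 + v3 + v4) :
    ∀ x ∈ {x : ℝ | ∃ p1 p2 p3 p4 : ℝ, 0 ≤ p1 ∧ 0 ≤ p2 ∧ 0 ≤ p3 ∧ 0 ≤ p4 ∧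
      p1 + p2 + p3 + p4 = 1 ∧
      x = v4 * p1 * p2 * p3 + v3 * p1 * p2 * p4 + v2 * p1 * p3 * p4
          + v1 * p2 * p3 * p4}, x ≤ (v2 + v3 + v4) / 27 := by
  rintro x ⟨p1, p2, p3, p4, hp1, hp2, hp3, hp4, hsum, rfl⟩
  have hv3 : 0 ≤ v3 := le_trans hv4 h34
  have hv2 : 0 ≤ v2 := le_trans hv3 h23
  have ha : p3 * p4 * (p1 + p2) ≤ 1/27 :=
    amgm3 p3 p4 (p1 + p2) hp3 hp4 (by linarith) (by linarith)
  have hb : p2 * p4 * (p1 + p3) ≤ 1/27 :=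
    amgm3 p2 p4 (p1 + p3) hp2 hp4 (by linarith) (by linarith)
  have hc : p2 * p3 * (p1 + p4) ≤ 1/27 :=
    amgm3 p2 p3 (p1 + p4) hp2 hp3 (by linarith) (by linarith)
  have h234 : 0 ≤ p2 * p3 * p4 := by positivity
  nlinarith [mul_le_mul_of_nonneg_left ha hv2, mul_le_mul_of_nonneg_left hb hv3,
    mul_le_mul_of_nonneg_left hc hv4,
    mul_nonneg (sub_nonneg.2 h1) h234]

lemma lmax_mem (v1 v2 v3 v4 : ℝ) :
    v1 / 27 ∈ {x : ℝ | ∃ p1 p2 p3 p4 : ℝ, 0 ≤ p1 ∧ 0 ≤ p2 ∧ 0 ≤ p3 ∧ 0 ≤ p4 ∧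
      p1 + p2 + p3 + p4 = 1 ∧
      x = v4 * p1 * p2 * p3 + v3 * p1 * p2 * p4 + v2 * p1 * p3 * p4
          + v1 * p2 * p3 * p4} := by
  refine ⟨0, 1/3, 1/3, 1/3, le_refl _, by norm_num, by norm_num, by norm_num,
    by norm_num, by ring⟩

lemma lmax_bounds (v1 v2 v3 v4 : ℝ) (hv4 : 0 ≤ v4) (h34 : v4 ≤ v3) (h23 : v3 ≤ v2)
    (h1 : v1 ≤ v2 + v3 + v4) :
    v1 / 27 ≤ Lmax4 v1 v2 v3 v4 ∧ Lmax4 v1 v2 v3 v4 ≤ (v2 + v3 + v4) / 27 := by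
  have hub := lmax_ub v1 v2 v3 v4 hv4 h34 h23 h1
  constructor
  · exact le_csSup ⟨(v2 + v3 + v4) / 27, hub⟩ (lmax_mem v1 v2 v3 v4)
  · exact csSup_le ⟨v1 / 27, lmax_mem v1 v2 v3 v4⟩ hub

/-- Fix `v2 ≥ v3 ≥ v4 > 0`.  As `v1 ↑ v2 + v3 + v4`,
`Q(v1,v2,v3,v4) = (v1+v2+v3+v4)/Lmax[v1,v2,v3,v4] → 54`; in particular the
bound `R_u(v) < 1 − (3/4)·2^{1/3}` on the region `{v1 < v2+v3+v4}` is sharp. -/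
theorem stmt15 (v2 v3 v4 : ℝ)
    (hv4 : 0 < v4) (h34 : v4 ≤ v3) (h23 : v3 ≤ v2) :
    Filter.Tendsto (fun v1 : ℝ => (v1 + v2 + v3 + v4) / Lmax4 v1 v2 v3 v4)
      (nhdsWithin (v2 + v3 + v4) (Set.Iio (v2 + v3 + v4))) (nhds 54) ∧
    ∀ ε : ℝ, 0 < ε → ∃ v1 : ℝ, 0 < v1 ∧ v1 < v2 + v3 + v4 ∧
      1 - (3/4) * (2 : ℝ) ^ ((1 : ℝ)/3) - ε < Ru v1 v2 v3 v4 := by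
  set s : ℝ := v2 + v3 + v4 with hs_def
  have hs : 0 < s := by
    have : 0 < v3 := lt_of_lt_of_le hv4 h34
    have : 0 < v2 := lt_of_lt_of_le (lt_of_lt_of_le hv4 h34) h23
    positivity
  -- the filter
  set l := nhdsWithin s (Set.Iio s) with hl_def
  -- eventually v1 ∈ (s/2, s)
  have hev : ∀ᶠ v1 in l, s / 2 < v1 ∧ v1 < s := by
    have h1 : ∀ᶠ v1 in l, v1 ∈ Set.Iio s := eventually_mem_nhdsWithin
    have h2 : ∀ᶠ v1 in l, s / 2 < v1 := by
      apply Filter.Eventually.filter_mono nhdsWithin_le_nhds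
      exact eventually_gt_nhds (by linarith)
    filter_upwards [h1, h2] with v1 hv1 hv2 using ⟨hv2, hv1⟩
  -- key bounds for such v1
  have hkey : ∀ v1 : ℝ, s / 2 < v1 → v1 < s →
      27 * (v1 + s) / s ≤ (v1 + v2 + v3 + v4) / Lmax4 v1 v2 v3 v4 ∧
      (v1 + v2 + v3 + v4) / Lmax4 v1 v2 v3 v4 ≤ 27 * (v1 + s) / v1 := by
    intro v1 hlo hhi
    have hv1pos : 0 < v1 := by linarith
    obtain ⟨hL1, hL2⟩ := lmax_bounds v1 v2 v3 v4 hv4.le h34 h23 hhi.le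
    have hLpos : 0 < Lmax4 v1 v2 v3 v4 := lt_of_lt_of_le (by positivity) hL1
    have hnum : (0:ℝ) ≤ v1 + s := by linarith
    have hnum' : v1 + v2 + v3 + v4 = v1 + s := by rw [hs_def]; ring
    constructor
    · rw [hnum']
      calc 27 * (v1 + s) / s = (v1 + s) / (s / 27) := by field_simp
        _ ≤ (v1 + s) / Lmax4 v1 v2 v3 v4 :=
          div_le_div_of_nonneg_left hnum hLpos hL2
    · rw [hnum']
      calc (v1 + s) / Lmax4 v1 v2 v3 v4 ≤ (v1 + s) / (v1 / 27) :=
          div_le_div_of_nonneg_left hnum (by positivity) hL1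
        _ = 27 * (v1 + s) / v1 := by field_simp
  -- squeeze
  have hT : Filter.Tendsto (fun v1 : ℝ => (v1 + v2 + v3 + v4) / Lmax4 v1 v2 v3 v4)
      l (nhds 54) := by
    have hg : Filter.Tendsto (fun v1 : ℝ => 27 * (v1 + s) / s) l (nhds 54) := by
      have : Filter.Tendsto (fun v1 : ℝ => 27 * (v1 + s) / s) (nhds s)
          (nhds (27 * (s + s) / s)) := by
        apply Filter.Tendsto.div_const
        exact (Filter.tendsto_id.add_const s).const_mul 27
      have heq : 27 * (s + s) / s = 54 := by field_simp; ring
      rw [heq] at this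
      exact this.mono_left nhdsWithin_le_nhds
    have hh : Filter.Tendsto (fun v1 : ℝ => 27 * (v1 + s) / v1) l (nhds 54) := by
      have : Filter.Tendsto (fun v1 : ℝ => 27 * (v1 + s) / v1) (nhds s)
          (nhds (27 * (s + s) / s)) := by
        apply Filter.Tendsto.div
        · exact (Filter.tendsto_id.add_const s).const_mul 27
        · exact Filter.tendsto_id
        · exact hs.ne'
      have heq : 27 * (s + s) / s = 54 := by field_simp; ring
      rw [heq] at this
      exact this.mono_left nhdsWithin_le_nhds
    refine tendsto_of_tendsto_of_tendsto_of_le_of_le' hg hh ?_ ?_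
    · filter_upwards [hev] with v1 ⟨h1, h2⟩ using (hkey v1 h1 h2).1
    · filter_upwards [hev] with v1 ⟨h1, h2⟩ using (hkey v1 h1 h2).2
  refine ⟨hT, ?_⟩
  -- part 2
  intro ε hε
  have h54 : (54:ℝ) ^ ((1:ℝ)/3) = 3 * (2:ℝ) ^ ((1:ℝ)/3) := by
    have h27 : (27:ℝ) ^ ((1:ℝ)/3) = 3 := by
      rw [show (27:ℝ) = 3 ^ (3:ℕ) by norm_num, ← Real.rpow_natCast (3:ℝ) 3,
        ← Real.rpow_mul (by norm_num)]
      norm_num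
    rw [show (54:ℝ) = 27 * 2 by norm_num, Real.mul_rpow (by norm_num) (by norm_num), h27]
  have hRu : Filter.Tendsto (fun v1 : ℝ => Ru v1 v2 v3 v4) l
      (nhds (1 - (3/4) * (2:ℝ) ^ ((1:ℝ)/3))) := by
    have h1 : Filter.Tendsto
        (fun v1 : ℝ => ((v1 + v2 + v3 + v4) / Lmax4 v1 v2 v3 v4) ^ ((1:ℝ)/3)) l
        (nhds ((54:ℝ) ^ ((1:ℝ)/3))) :=
      hT.rpow_const (Or.inl (by norm_num))
    have h2 := (h1.const_mul (1/4 : ℝ)).const_sub 1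
    have heq : 1 - 1/4 * (54:ℝ) ^ ((1:ℝ)/3) = 1 - (3/4) * (2:ℝ) ^ ((1:ℝ)/3) := by
      rw [h54]; ring
    rw [heq] at h2
    exact h2
  have hclose : ∀ᶠ v1 in l,
      |Ru v1 v2 v3 v4 - (1 - (3/4) * (2:ℝ) ^ ((1:ℝ)/3))| < ε := by
    have h := Metric.tendsto_nhds.mp hRu ε hε
    filter_upwards [h] with x hx
    rw [Real.dist_eq] at hx
    exact hx
  have hneb : l.NeBot := by
    rw [hl_def]
    exact nhdsLT_neBot s
  obtain ⟨v1, hv1a, hv1b⟩ := (hclose.and hev).exists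
  refine ⟨v1, by linarith [hv1b.1, hs], hv1b.2, ?_⟩
  have := abs_lt.mp hv1a
  linarith [this.1]
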